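/- Fix an integer d ≥ 2 and let R : ℕ → ℚ be any function. Define A = R(d), B = −R(d)/d + (1/(2d)) · Σ_{i+j=d, i,j≥1} C(3d−2, 3i−1) · i² · j² · R(i) · R(j), and C = −(1/2) · Σ_{i+j=d, i,j≥1} C(3d−2, 3i−1) · i · j · R(i) · R(j). Then the Kontsevich recursion equation R(d) = Σ_{i+j=d, i,j≥1} i² · j · ( j · C(3d−4, 3i−2) − i · C(3d−4, 3i−1) ) · R(i) · R(j) holds if and only if 9(d−2) · A = 3(d+2) · B + 2d · C. -/

import Mathlib

private lemma keyA (n a b : ℕ) (hn : n = 3*a+3*b+2) :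
    (n+2) * ((n+1) * Nat.choose n (3*a+1)) =
    (3*a+2) * ((3*b+2) * Nat.choose (n+2) (3*a+2)) := by
  subst hn
  have h1 : (3*a+3*b+2+1) * Nat.choose (3*a+3*b+2) (3*a+1)
      = Nat.choose (3*a+3*b+3) (3*a+2) * (3*a+2) := by
    simpa using Nat.add_one_mul_choose_eq (3*a+3*b+2) (3*a+1)
  have h2 : Nat.choose (3*a+3*b+3) (3*a+2) = Nat.choose (3*a+3*b+3) (3*b+1) := by
    have h := Nat.choose_symm (n := 3*a+3*b+3) (k := 3*a+2) (by omega)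
    rw [show 3*a+3*b+3 - (3*a+2) = 3*b+1 by omega] at h
    exact h.symm
  have h3 : (3*a+3*b+3+1) * Nat.choose (3*a+3*b+3) (3*b+1)
      = Nat.choose (3*a+3*b+4) (3*b+2) * (3*b+2) := by
    simpa using Nat.add_one_mul_choose_eq (3*a+3*b+3) (3*b+1)
  have h4 : Nat.choose (3*a+3*b+4) (3*b+2) = Nat.choose (3*a+3*b+4) (3*a+2) := by
    have h := Nat.choose_symm (n := 3*a+3*b+4) (k := 3*a+2) (by omega)
    rw [show 3*a+3*b+4 - (3*a+2) = 3*b+2 by omega] at h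
    exact h
  calc (3*a+3*b+2+2) * ((3*a+3*b+2+1) * Nat.choose (3*a+3*b+2) (3*a+1))
      = (3*a+2) * ((3*a+3*b+3+1) * Nat.choose (3*a+3*b+3) (3*b+1)) := by
        rw [h1, h2]; ring
    _ = (3*a+2) * ((3*b+2) * Nat.choose (3*a+3*b+2+2) (3*a+2)) := by
        rw [h3, h4]; ring

private lemma keyB (n a b : ℕ) (hn : n = 3*a+3*b+2) :
    (n+2) * ((n+1) * Nat.choose n (3*a+2)) =
    (3*b+2) * ((3*b+1) * Nat.choose (n+2) (3*a+2)) := by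
  subst hn
  have h0 : Nat.choose (3*a+3*b+2) (3*a+2) = Nat.choose (3*a+3*b+2) (3*b) := by
    have h := Nat.choose_symm (n := 3*a+3*b+2) (k := 3*a+2) (by omega)
    rw [show 3*a+3*b+2 - (3*a+2) = 3*b by omega] at h
    exact h.symm
  have h1 : (3*a+3*b+2+1) * Nat.choose (3*a+3*b+2) (3*b)
      = Nat.choose (3*a+3*b+3) (3*b+1) * (3*b+1) := by
    simpa using Nat.add_one_mul_choose_eq (3*a+3*b+2) (3*b)
  have h3 : (3*a+3*b+3+1) * Nat.choose (3*a+3*b+3) (3*b+1)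
      = Nat.choose (3*a+3*b+4) (3*b+2) * (3*b+2) := by
    simpa using Nat.add_one_mul_choose_eq (3*a+3*b+3) (3*b+1)
  have h4 : Nat.choose (3*a+3*b+4) (3*b+2) = Nat.choose (3*a+3*b+4) (3*a+2) := by
    have h := Nat.choose_symm (n := 3*a+3*b+4) (k := 3*a+2) (by omega)
    rw [show 3*a+3*b+4 - (3*a+2) = 3*b+2 by omega] at h
    exact h
  calc (3*a+3*b+2+2) * ((3*a+3*b+2+1) * Nat.choose (3*a+3*b+2) (3*a+2))
      = (3*b+1) * ((3*a+3*b+3+1) * Nat.choose (3*a+3*b+3) (3*b+1)) := by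
        rw [h0, h1]; ring
    _ = (3*b+2) * ((3*b+1) * Nat.choose (3*a+3*b+2+2) (3*a+2)) := by
        rw [h3, h4]; ring

private def Dterm (d : ℕ) (R : ℕ → ℚ) (i : ℕ) : ℚ :=
  6 * (3 * (d : ℚ) - 2) * ((d : ℚ) - 1) * ((i : ℚ) ^ 2 * ((d - i : ℕ) : ℚ) *
          (((d - i : ℕ) : ℚ) * (Nat.choose (3 * d - 4) (3 * i - 2) : ℚ)
            - (i : ℚ) * (Nat.choose (3 * d - 4) (3 * i - 1) : ℚ))
          * R i * R (d - i))
    - 3 * ((d : ℚ) + 2) * ((Nat.choose (3 * d - 2) (3 * i - 1) : ℚ) * (i : ℚ) ^ 2 * ((d - i : ℕ) : ℚ) ^ 2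
          * R i * R (d - i))
    + 2 * (d : ℚ) ^ 2 * ((Nat.choose (3 * d - 2) (3 * i - 1) : ℚ) * (i : ℚ) * ((d - i : ℕ) : ℚ)
          * R i * R (d - i))

/-- For `d ≥ 2` and any `R : ℕ → ℚ`, with `A`, `B`, `C` the genus-0 divisor degrees
built from `R`, Kontsevich's recursion for `R d` holds iff `9(d-2)A = 3(d+2)B + 2dC`. -/
theorem stmt_1 (d : ℕ) (hd : 2 ≤ d) (R : ℕ → ℚ) (A B C : ℚ)
    (hA : A = R d)
    (hB : B = -R d / (d : ℚ) + (1 / (2 * (d : ℚ))) *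
      ∑ i ∈ Finset.Ico 1 d,
        (Nat.choose (3 * d - 2) (3 * i - 1) : ℚ) * (i : ℚ) ^ 2 * ((d - i : ℕ) : ℚ) ^ 2
          * R i * R (d - i))
    (hC : C = -(1 / 2) *
      ∑ i ∈ Finset.Ico 1 d,
        (Nat.choose (3 * d - 2) (3 * i - 1) : ℚ) * (i : ℚ) * ((d - i : ℕ) : ℚ)
          * R i * R (d - i)) :
    (R d = ∑ i ∈ Finset.Ico 1 d,
        (i : ℚ) ^ 2 * ((d - i : ℕ) : ℚ) *
          (((d - i : ℕ) : ℚ) * (Nat.choose (3 * d - 4) (3 * i - 2) : ℚ)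
            - (i : ℚ) * (Nat.choose (3 * d - 4) (3 * i - 1) : ℚ))
          * R i * R (d - i))
      ↔ 9 * ((d : ℚ) - 2) * A = 3 * ((d : ℚ) + 2) * B + 2 * (d : ℚ) * C := by
  subst hA hB hC
  have hd2 : (2 : ℚ) ≤ (d : ℚ) := by exact_mod_cast hd
  have hd0 : (d : ℚ) ≠ 0 := by exact ne_of_gt (by linarith)
  have hc1 : 6 * (3 * (d : ℚ) - 2) * ((d : ℚ) - 1) ≠ 0 := by
    have h : (0 : ℚ) < 6 * (3 * (d : ℚ) - 2) * ((d : ℚ) - 1) := by nlinarith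
    exact ne_of_gt h
  have hpair : ∀ i ∈ Finset.Ico 1 d, Dterm d R i + Dterm d R (d - i) = 0 := by
    intro i hi
    simp only [Finset.mem_Ico] at hi
    obtain ⟨a, rfl⟩ : ∃ a, i = a + 1 := ⟨i - 1, by omega⟩
    obtain ⟨b, rfl⟩ : ∃ b, d = (a + 1) + (b + 1) := ⟨d - (a + 1) - 1, by omega⟩
    simp only [Dterm]
    rw [show (a + 1) + (b + 1) - (a + 1) = b + 1 by omega]
    rw [show (a + 1) + (b + 1) - (b + 1) = a + 1 by omega]
    rw [show 3 * ((a + 1) + (b + 1)) - 2 = 3 * a + 3 * b + 2 + 2 by omega,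
        show 3 * ((a + 1) + (b + 1)) - 4 = 3 * a + 3 * b + 2 by omega,
        show 3 * (a + 1) - 1 = 3 * a + 2 by omega,
        show 3 * (a + 1) - 2 = 3 * a + 1 by omega,
        show 3 * (b + 1) - 1 = 3 * b + 2 by omega,
        show 3 * (b + 1) - 2 = 3 * b + 1 by omega]
    have esymn : Nat.choose (3 * a + 3 * b + 2 + 2) (3 * b + 2)
        = Nat.choose (3 * a + 3 * b + 2 + 2) (3 * a + 2) := by
      have h := Nat.choose_symm (n := 3 * a + 3 * b + 2 + 2) (k := 3 * a + 2) (by omega)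
      rw [show 3 * a + 3 * b + 2 + 2 - (3 * a + 2) = 3 * b + 2 by omega] at h
      exact h
    have esym : (Nat.choose (3 * a + 3 * b + 2 + 2) (3 * b + 2) : ℚ)
        = (Nat.choose (3 * a + 3 * b + 2 + 2) (3 * a + 2) : ℚ) := by exact_mod_cast esymn
    rw [esym]
    have k1 := keyA (3 * a + 3 * b + 2) a b rfl
    have k2 := keyB (3 * a + 3 * b + 2) a b rfl
    have k3 := keyA (3 * a + 3 * b + 2) b a (by omega)
    have k4 := keyB (3 * a + 3 * b + 2) b a (by omega)
    have q1 : ((3 : ℚ) * a + 3 * b + 4) * ((3 * (a : ℚ) + 3 * b + 3) * (Nat.choose (3 * a + 3 * b + 2) (3 * a + 1) : ℚ))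
        = (3 * (a : ℚ) + 2) * ((3 * (b : ℚ) + 2) * (Nat.choose (3 * a + 3 * b + 2 + 2) (3 * a + 2) : ℚ)) := by
      exact_mod_cast k1
    have q2 : ((3 : ℚ) * a + 3 * b + 4) * ((3 * (a : ℚ) + 3 * b + 3) * (Nat.choose (3 * a + 3 * b + 2) (3 * a + 2) : ℚ))
        = (3 * (b : ℚ) + 2) * ((3 * (b : ℚ) + 1) * (Nat.choose (3 * a + 3 * b + 2 + 2) (3 * a + 2) : ℚ)) := by
      exact_mod_cast k2
    have q3 : ((3 : ℚ) * a + 3 * b + 4) * ((3 * (a : ℚ) + 3 * b + 3) * (Nat.choose (3 * a + 3 * b + 2) (3 * b + 1) : ℚ))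
        = (3 * (b : ℚ) + 2) * ((3 * (a : ℚ) + 2) * (Nat.choose (3 * a + 3 * b + 2 + 2) (3 * a + 2) : ℚ)) := by
      have q3' : ((3 : ℚ) * a + 3 * b + 4) * ((3 * (a : ℚ) + 3 * b + 3) * (Nat.choose (3 * a + 3 * b + 2) (3 * b + 1) : ℚ))
          = (3 * (b : ℚ) + 2) * ((3 * (a : ℚ) + 2) * (Nat.choose (3 * a + 3 * b + 2 + 2) (3 * b + 2) : ℚ)) := by
        exact_mod_cast k3
      rw [esym] at q3'
      exact q3'
    have q4 : ((3 : ℚ) * a + 3 * b + 4) * ((3 * (a : ℚ) + 3 * b + 3) * (Nat.choose (3 * a + 3 * b + 2) (3 * b + 2) : ℚ))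
        = (3 * (a : ℚ) + 2) * ((3 * (a : ℚ) + 1) * (Nat.choose (3 * a + 3 * b + 2 + 2) (3 * a + 2) : ℚ)) := by
      have q4' : ((3 : ℚ) * a + 3 * b + 4) * ((3 * (a : ℚ) + 3 * b + 3) * (Nat.choose (3 * a + 3 * b + 2) (3 * b + 2) : ℚ))
          = (3 * (a : ℚ) + 2) * ((3 * (a : ℚ) + 1) * (Nat.choose (3 * a + 3 * b + 2 + 2) (3 * b + 2) : ℚ)) := by
        exact_mod_cast k4
      rw [esym] at q4'
      exact q4'
    push_cast
    linear_combination (2 * ((a : ℚ) + 1) ^ 2 * ((b : ℚ) + 1) ^ 2 * R (a + 1) * R (b + 1)) * q1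
      - (2 * ((a : ℚ) + 1) ^ 3 * ((b : ℚ) + 1) * R (a + 1) * R (b + 1)) * q2
      + (2 * ((a : ℚ) + 1) ^ 2 * ((b : ℚ) + 1) ^ 2 * R (a + 1) * R (b + 1)) * q3
      - (2 * ((a : ℚ) + 1) * ((b : ℚ) + 1) ^ 3 * R (a + 1) * R (b + 1)) * q4
  have hrefl : ∀ G : ℕ → ℚ, ∑ i ∈ Finset.Ico 1 d, G i = ∑ i ∈ Finset.Ico 1 d, G (d - i) := by
    intro G
    refine Finset.sum_nbij' (fun i => d - i) (fun i => d - i) ?_ ?_ ?_ ?_ ?_ <;>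
      intro i hi <;> simp only [Finset.mem_Ico] at hi ⊢ <;>
      first
        | omega
        | rw [show d - (d - i) = i by omega]
  have hzero : ∑ i ∈ Finset.Ico 1 d, Dterm d R i = 0 := by
    have h2 : (∑ i ∈ Finset.Ico 1 d, Dterm d R i) + (∑ i ∈ Finset.Ico 1 d, Dterm d R i) = 0 := by
      nth_rewrite 2 [hrefl (Dterm d R)]
      rw [← Finset.sum_add_distrib]
      exact Finset.sum_eq_zero hpair
    linarith
  have hexp : ∑ i ∈ Finset.Ico 1 d, Dterm d R i
      = 6 * (3 * (d : ℚ) - 2) * ((d : ℚ) - 1) * (∑ i ∈ Finset.Ico 1 d,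
        (i : ℚ) ^ 2 * ((d - i : ℕ) : ℚ) *
          (((d - i : ℕ) : ℚ) * (Nat.choose (3 * d - 4) (3 * i - 2) : ℚ)
            - (i : ℚ) * (Nat.choose (3 * d - 4) (3 * i - 1) : ℚ))
          * R i * R (d - i))
      - 3 * ((d : ℚ) + 2) * (∑ i ∈ Finset.Ico 1 d,
        (Nat.choose (3 * d - 2) (3 * i - 1) : ℚ) * (i : ℚ) ^ 2 * ((d - i : ℕ) : ℚ) ^ 2
          * R i * R (d - i))
      + 2 * (d : ℚ) ^ 2 * (∑ i ∈ Finset.Ico 1 d,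
        (Nat.choose (3 * d - 2) (3 * i - 1) : ℚ) * (i : ℚ) * ((d - i : ℕ) : ℚ)
          * R i * R (d - i)) := by
    rw [Finset.mul_sum, Finset.mul_sum, Finset.mul_sum, ← Finset.sum_sub_distrib,
      ← Finset.sum_add_distrib]
    exact Finset.sum_congr rfl fun i _ => by simp only [Dterm]
  have main : 6 * (3 * (d : ℚ) - 2) * ((d : ℚ) - 1) * (∑ i ∈ Finset.Ico 1 d,
        (i : ℚ) ^ 2 * ((d - i : ℕ) : ℚ) *
          (((d - i : ℕ) : ℚ) * (Nat.choose (3 * d - 4) (3 * i - 2) : ℚ)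
            - (i : ℚ) * (Nat.choose (3 * d - 4) (3 * i - 1) : ℚ))
          * R i * R (d - i))
      = 3 * ((d : ℚ) + 2) * (∑ i ∈ Finset.Ico 1 d,
        (Nat.choose (3 * d - 2) (3 * i - 1) : ℚ) * (i : ℚ) ^ 2 * ((d - i : ℕ) : ℚ) ^ 2
          * R i * R (d - i))
      - 2 * (d : ℚ) ^ 2 * (∑ i ∈ Finset.Ico 1 d,
        (Nat.choose (3 * d - 2) (3 * i - 1) : ℚ) * (i : ℚ) * ((d - i : ℕ) : ℚ)
          * R i * R (d - i)) := by
    rw [hexp] at hzero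
    linarith
  constructor
  · intro h
    have h2 : 6 * (3 * (d : ℚ) - 2) * ((d : ℚ) - 1) * R d
        = 3 * ((d : ℚ) + 2) * (∑ i ∈ Finset.Ico 1 d,
        (Nat.choose (3 * d - 2) (3 * i - 1) : ℚ) * (i : ℚ) ^ 2 * ((d - i : ℕ) : ℚ) ^ 2
          * R i * R (d - i))
      - 2 * (d : ℚ) ^ 2 * (∑ i ∈ Finset.Ico 1 d,
        (Nat.choose (3 * d - 2) (3 * i - 1) : ℚ) * (i : ℚ) * ((d - i : ℕ) : ℚ)
          * R i * R (d - i)) := by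
      rw [h]; exact main
    field_simp
    linear_combination h2
  · intro h
    have h2 : 6 * (3 * (d : ℚ) - 2) * ((d : ℚ) - 1) * R d
        = 3 * ((d : ℚ) + 2) * (∑ i ∈ Finset.Ico 1 d,
        (Nat.choose (3 * d - 2) (3 * i - 1) : ℚ) * (i : ℚ) ^ 2 * ((d - i : ℕ) : ℚ) ^ 2
          * R i * R (d - i))
      - 2 * (d : ℚ) ^ 2 * (∑ i ∈ Finset.Ico 1 d,
        (Nat.choose (3 * d - 2) (3 * i - 1) : ℚ) * (i : ℚ) * ((d - i : ℕ) : ℚ)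
          * R i * R (d - i)) := by
      have h2d : (2 * (d : ℚ)) ≠ 0 := by
        exact ne_of_gt (by linarith)
      field_simp at h
      refine mul_left_cancel₀ h2d ?_
      linear_combination (2 * (d : ℚ)) * h
    exact mul_left_cancel₀ hc1 (h2.trans main.symm)
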